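/- arXiv:1805.04346 — 7 statements merged into one kernel-verified Lean document; each statement's English description precedes it below -/
import Mathlib

section
/- Consider a commuting square of categories and functors K ∘ F = G ∘ H with G : C → D fully faithful and H : A → C, K : B → D discrete isofibrations. If (1) F : A → B is fully faithful, and (2) an object b of B lies in the essential image of F if and only if K b lies in the essential image of G, then the square is a pullback up to equivalence: the canonical comparison functor from A to the pullback category of K along G is an equivalence. -/
open CategoryTheory


/-- A functor `U : A ⥤ B` is a *discrete isofibration* if every isomorphism
`f : b ≅ U.obj a` in `B` admits a unique lift to an isomorphism in `A` with codomain `a`. -/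
def DiscreteIsofibration {A B : Type*} [Category A] [Category B] (U : A ⥤ B) : Prop :=
  ∀ (a : A) (b : B) (f : b ≅ U.obj a),
    ∃! p : Σ' (src : A) (_ : src ≅ a), U.obj src = b,
      U.map p.2.1.hom = eqToHom p.2.2 ≫ f.hom

universe v₁ v₂ v₃ u₁ u₂ u₃

variable {B : Type u₁} {C : Type u₂} {D : Type u₃}
  [Category.{v₁} B] [Category.{v₂} C] [Category.{v₃} D]

/-- Objects of the strict pullback category of `K : B ⥤ D` along `G : C ⥤ D`. -/
structure PullbackCat (K : B ⥤ D) (G : C ⥤ D) : Type max u₁ u₂ where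
  b : B
  c : C
  eq : K.obj b = G.obj c

/-- Morphisms in the strict pullback category. -/
@[ext] structure PullbackCatHom {K : B ⥤ D} {G : C ⥤ D} (x y : PullbackCat K G) where
  f : x.b ⟶ y.b
  g : x.c ⟶ y.c
  w : K.map f ≫ eqToHom y.eq = eqToHom x.eq ≫ G.map g

instance {K : B ⥤ D} {G : C ⥤ D} : Category (PullbackCat K G) where
  Hom x y := PullbackCatHom x y
  id x := ⟨𝟙 x.b, 𝟙 x.c, by simp⟩
  comp u v := ⟨u.f ≫ v.f, u.g ≫ v.g, by
    simp only [Functor.map_comp, Category.assoc, v.w]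
    rw [← Category.assoc, u.w, Category.assoc]⟩
  id_comp u := by apply PullbackCatHom.ext <;> simp
  comp_id u := by apply PullbackCatHom.ext <;> simp
  assoc u v w := by apply PullbackCatHom.ext <;> simp


@[simp] lemma PullbackCat.id_f {K : B ⥤ D} {G : C ⥤ D} (x : PullbackCat K G) :
    (𝟙 x : x ⟶ x).f = 𝟙 x.b := rfl
@[simp] lemma PullbackCat.id_g {K : B ⥤ D} {G : C ⥤ D} (x : PullbackCat K G) :
    (𝟙 x : x ⟶ x).g = 𝟙 x.c := rfl
@[simp] lemma PullbackCat.comp_f {K : B ⥤ D} {G : C ⥤ D} {x y z : PullbackCat K G}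
    (u : x ⟶ y) (v : y ⟶ z) : (u ≫ v).f = u.f ≫ v.f := rfl
@[simp] lemma PullbackCat.comp_g {K : B ⥤ D} {G : C ⥤ D} {x y z : PullbackCat K G}
    (u : x ⟶ y) (v : y ⟶ z) : (u ≫ v).g = u.g ≫ v.g := rfl

/-- The second projection from the pullback category to `C`. -/
def pullbackCatSnd (K : B ⥤ D) (G : C ⥤ D) : PullbackCat K G ⥤ C where
  obj x := x.c
  map u := u.g

/-- The first projection from the pullback category to `B`. -/
def pullbackCatFst (K : B ⥤ D) (G : C ⥤ D) : PullbackCat K G ⥤ B where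
  obj x := x.b
  map u := u.f

/-- The canonical comparison functor into the pullback category induced by a strictly
commuting square `F ⋙ K = H ⋙ G`. -/
def pullbackCatComparison {A : Type*} [Category A] (K : B ⥤ D) (G : C ⥤ D)
    (F : A ⥤ B) (H : A ⥤ C) (hsq : F ⋙ K = H ⋙ G) : A ⥤ PullbackCat K G where
  obj a := ⟨F.obj a, H.obj a, Functor.congr_obj hsq a⟩
  map {a a'} f := ⟨F.map f, H.map f, by
    have h := Functor.congr_hom hsq f
    simp only [Functor.comp_map] at h
    rw [h]; simp⟩
  map_id a := by apply PullbackCatHom.ext <;> simp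
  map_comp u v := by apply PullbackCatHom.ext <;> simp

/-- Pullback lemma, "if" direction: given a strictly commuting square `K ∘ F = G ∘ H`
with `G` fully faithful and `H`, `K` discrete isofibrations, if `F` is fully faithful and
an object `b` of `B` is in the essential image of `F` iff `K.obj b` is in the essential
image of `G`, then the canonical comparison functor from `A` to the pullback category of
`K` along `G` is an equivalence. -/
theorem pullbackLemma_if
    {A : Type*} [Category A]
    (F : A ⥤ B) (H : A ⥤ C) (K : B ⥤ D) (G : C ⥤ D)
    (hsq : F ⋙ K = H ⋙ G)
    (hG : G.FullyFaithful)
    (hH : DiscreteIsofibration H) (hK : DiscreteIsofibration K)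
    (hF : F.FullyFaithful)
    (hess : ∀ b : B, F.essImage b ↔ G.essImage (K.obj b)) :
    (pullbackCatComparison K G F H hsq).IsEquivalence := by
  have hfaith : (pullbackCatComparison K G F H hsq).Faithful := by
    constructor
    intro a a' u v h
    exact hF.map_injective (congrArg PullbackCatHom.f h)
  have hfull : (pullbackCatComparison K G F H hsq).Full := by
    constructor
    intro a a' p
    refine ⟨hF.preimage p.f, ?_⟩
    apply PullbackCatHom.ext
    · simp [pullbackCatComparison]
    · apply hG.map_injective
      have h1 := Functor.congr_hom hsq (hF.preimage p.f)
      simp only [Functor.comp_map, hF.map_preimage] at h1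
      have h2 := p.w
      simp only [pullbackCatComparison]
      erw [hF.map_preimage] at h1
      erw [h1] at h2
      erw [Category.assoc, Category.assoc, eqToHom_trans, eqToHom_refl, Category.comp_id] at h2
      exact (cancel_epi (eqToHom (Functor.congr_obj hsq a))).mp h2
  have hess' : (pullbackCatComparison K G F H hsq).EssSurj := by
    constructor
    intro x
    obtain ⟨a, ⟨e⟩⟩ := (hess x.b).mpr ⟨x.c, ⟨eqToIso x.eq.symm⟩⟩
    set gIso : H.obj a ≅ x.c :=
      hG.preimageIso (eqToIso (Functor.congr_obj hsq a).symm ≪≫ K.mapIso e ≪≫ eqToIso x.eq)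
      with hg
    have hGg : G.map gIso.hom =
        eqToHom (Functor.congr_obj hsq a).symm ≫ K.map e.hom ≫ eqToHom x.eq := by
      simp [hg, Functor.FullyFaithful.preimageIso]
    have hGg' : G.map gIso.inv =
        eqToHom x.eq.symm ≫ K.map e.inv ≫ eqToHom (Functor.congr_obj hsq a) := by
      simp [hg, Functor.FullyFaithful.preimageIso]
    refine ⟨a, ⟨?_⟩⟩
    refine ⟨⟨e.hom, gIso.hom, ?_⟩, ⟨e.inv, gIso.inv, ?_⟩, ?_, ?_⟩
    · erw [hGg]; simp [pullbackCatComparison]; erw [eqToHom_trans_assoc, eqToHom_refl, Category.id_comp]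
    · erw [hGg']; simp [pullbackCatComparison]
    · apply PullbackCatHom.ext <;> simp [pullbackCatComparison]
    · apply PullbackCatHom.ext <;> simp [pullbackCatComparison]
  exact { }
end

section
/- In the setting of the previous square (G fully faithful, H and K discrete isofibrations), if the square is a pullback then F is fully faithful and an object b of B is in the essential image of F if and only if K b is in the essential image of G. -/
open CategoryTheory


universe v₁ v₂ v₃ u₁ u₂ u₃

variable {B : Type u₁} {C : Type u₂} {D : Type u₃}
  [Category.{v₁} B] [Category.{v₂} C] [Category.{v₃} D]

lemma pullbackCatFst_faithful {K : B ⥤ D} {G : C ⥤ D} (hG : G.FullyFaithful) :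
    (pullbackCatFst K G).Faithful where
  map_injective {x y} u v h := by
    apply PullbackCatHom.ext
    · exact h
    · apply hG.map_injective
      have hu := u.w
      have hv := v.w
      rw [← cancel_epi (eqToHom x.eq), ← hu, ← hv]
      simp only [pullbackCatFst] at h
      rw [h]

lemma pullbackCatFst_full {K : B ⥤ D} {G : C ⥤ D} (hG : G.FullyFaithful) :
    (pullbackCatFst K G).Full where
  map_surjective {x y} f := by
    refine ⟨⟨f, hG.preimage (eqToHom x.eq.symm ≫ K.map f ≫ eqToHom y.eq), ?_⟩, rfl⟩
    rw [hG.map_preimage]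
    simp
    rfl

lemma comparison_comp_fst {A : Type*} [Category A] (K : B ⥤ D) (G : C ⥤ D)
    (F : A ⥤ B) (H : A ⥤ C) (hsq : F ⋙ K = H ⋙ G) :
    pullbackCatComparison K G F H hsq ⋙ pullbackCatFst K G = F := rfl

/-- Pullback lemma, "only if" direction: if a strictly commuting square `K ∘ F = G ∘ H`
with `G` fully faithful and `H`, `K` discrete isofibrations is a pullback (i.e. the
canonical comparison functor to the pullback category is an isomorphism of categories,
here: an equivalence), then `F` is fully faithful and an object `b` of `B` is in the
essential image of `F` iff `K.obj b` is in the essential image of `G`. -/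
theorem pullbackLemma_only_if
    {A : Type*} [Category A]
    (F : A ⥤ B) (H : A ⥤ C) (K : B ⥤ D) (G : C ⥤ D)
    (hsq : F ⋙ K = H ⋙ G)
    (hG : G.FullyFaithful)
    (hH : DiscreteIsofibration H) (hK : DiscreteIsofibration K)
    (hpb : (pullbackCatComparison K G F H hsq).IsEquivalence) :
    F.Full ∧ F.Faithful ∧ ∀ b : B, F.essImage b ↔ G.essImage (K.obj b) := by
  have hfull := pullbackCatFst_full (K := K) (G := G) hG
  have hfaith := pullbackCatFst_faithful (K := K) (G := G) hG
  have hPfull : (pullbackCatComparison K G F H hsq).Full := inferInstance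
  have hPfaith : (pullbackCatComparison K G F H hsq).Faithful := inferInstance
  refine ⟨?_, ?_, ?_⟩
  · rw [← comparison_comp_fst K G F H hsq]
    exact Functor.Full.comp _ _
  · rw [← comparison_comp_fst K G F H hsq]
    exact Functor.Faithful.comp _ _
  · intro b
    constructor
    · rintro ⟨a, ⟨i⟩⟩
      exact ⟨H.obj a, ⟨(eqToIso (Functor.congr_obj hsq a)).symm ≪≫ K.mapIso i⟩⟩
    · rintro ⟨c, ⟨φ⟩⟩
      obtain ⟨⟨b', i, heq⟩, -, -⟩ := hK b (G.obj c) φ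
      obtain ⟨a, ⟨j⟩⟩ := Functor.EssSurj.mem_essImage (F := pullbackCatComparison K G F H hsq)
        (⟨b', c, heq⟩ : PullbackCat K G)
      exact ⟨a, ⟨(pullbackCatFst K G).mapIso j ≪≫ i⟩⟩
end

section
/- For monads S and T on a category C, every functor between the Kleisli categories of S and T commuting strictly with the free functors from C is of the form α_! (postcomposition of Kleisli morphisms with α) for a unique monad morphism α : S → T. Hence the Kleisli construction gives a fully faithful functor from the category of monads on C to categories under C. -/
open CategoryTheory

variable {C : Type u₁} [Category.{v₁} C]

/-- The action on homs of the functor `α_!` induced by a monad morphism `α : S ⟶ T`: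
a Kleisli morphism `f : X ⟶ S Y` is sent to `f ≫ α_Y : X ⟶ T Y`. -/
def kleisliPushMap {S T : Monad C} (α : S ⟶ T) {X Y : C} (f : X ⟶ (S : C ⥤ C).obj Y) :
    X ⟶ (T : C ⥤ C).obj Y := f ≫ α.app Y

lemma kleisliPushMap_comp {S T : Monad C} (α : S ⟶ T) {X Y Z : C}
    (f : X ⟶ (S : C ⥤ C).obj Y) (g : Y ⟶ (S : C ⥤ C).obj Z) :
    kleisliPushMap α (f ≫ (S : C ⥤ C).map g ≫ S.μ.app Z) =
      kleisliPushMap α f ≫ (T : C ⥤ C).map (kleisliPushMap α g) ≫ T.μ.app Z := by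
  unfold kleisliPushMap
  simp only [Category.assoc, MonadHom.app_μ, Functor.map_comp]
  rw [← Category.assoc ((S : C ⥤ C).map g), ← (S : C ⥤ C).map_comp]
  rw [α.toNatTrans.naturality_assoc]
  simp [Functor.map_comp]

/-- For a monad morphism `α : S ⟶ T`, the functor `α_! : Kl(S) ⥤ Kl(T)`: it is the
identity on objects and sends a Kleisli morphism `f : X ⟶ S Y` to `f ≫ α_Y`. -/
def kleisliPush {S T : Monad C} (α : S ⟶ T) : Kleisli S ⥤ Kleisli T where
  obj X := Kleisli.mk T X.of
  map {_ _} f := ⟨kleisliPushMap α f.of⟩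
  map_id X := Kleisli.hom_ext (α.app_η X.of)
  map_comp {_ _ _} f g := Kleisli.hom_ext (kleisliPushMap_comp α f.of g.of)

/-! ### Auxiliary infrastructure -/

/-- Hom types in the Kleisli category, with the category instance made explicit. -/
abbrev KlHom (T : Monad C) (X Y : C) : Type _ :=
  @Quiver.Hom (Kleisli T)
    (@CategoryStruct.toQuiver (Kleisli T)
      (@Category.toCategoryStruct (Kleisli T) (Kleisli.category T))) ((Kleisli.Adjunction.toKleisli T).obj X)
      ((Kleisli.Adjunction.toKleisli T).obj Y)

/-- The Kleisli morphism `S Y ⟶ Y` whose underlying map is the identity. -/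
def kH (S : Monad C) (Y : C) : KlHom S ((S : C ⥤ C).obj Y) Y :=
  Kleisli.Hom.mk (𝟙 ((S : C ⥤ C).obj Y))

/-- View a Kleisli morphism as a morphism in the base category. -/
def toC {T : Monad C} {X Y : C} (f : KlHom T X Y) : X ⟶ (T : C ⥤ C).obj Y := f.of

/-- View a morphism `X ⟶ T Y` in the base category as a Kleisli morphism. -/
def ofC {T : Monad C} {X Y : C} (f : X ⟶ (T : C ⥤ C).obj Y) : KlHom T X Y := Kleisli.Hom.mk f

lemma toC_ofC {T : Monad C} {X Y : C} (f : X ⟶ (T : C ⥤ C).obj Y) :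
    toC (ofC (T := T) f) = f := rfl

lemma ofC_toC {T : Monad C} {X Y : C} (f : KlHom T X Y) : ofC (toC f) = f := rfl

lemma toC_inj {T : Monad C} {X Y : C} {f g : KlHom T X Y} (h : toC f = toC g) : f = g := Kleisli.hom_ext h

lemma factor {S : Monad C} {X Y : C} (f : KlHom S X Y) :
    f = (Kleisli.Adjunction.toKleisli S).map (toC f) ≫ kH S Y := by
  apply toC_inj
  show toC f = (toC f ≫ S.η.app _) ≫ (S : C ⥤ C).map (toC (kH S Y)) ≫ S.μ.app _
  simp [kH, toC]
  erw [Category.assoc, S.left_unit, Category.comp_id]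

lemma kH_comp_toKleisli {S : Monad C} {X Y : C} (f : X ⟶ Y) :
    (kH S X ≫ (Kleisli.Adjunction.toKleisli S).map f) = ofC ((S : C ⥤ C).map f) := by
  apply toC_inj
  show toC (kH S X) ≫ (S : C ⥤ C).map (f ≫ S.η.app _) ≫ S.μ.app _ = (S : C ⥤ C).map f
  simp [kH, toC]

lemma kH_comp_kH {S : Monad C} (X : C) :
    (kH S ((S : C ⥤ C).obj X) ≫ kH S X) = ofC (S.μ.app X) := by
  apply toC_inj
  show toC (kH S _) ≫ (S : C ⥤ C).map (toC (kH S X)) ≫ S.μ.app _ = S.μ.app X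
  simp [kH, toC]

lemma toKleisli_comp_ofC {T : Monad C} {X A Y : C} (f : X ⟶ A)
    (b : A ⟶ (T : C ⥤ C).obj Y) :
    (Kleisli.Adjunction.toKleisli T).map f ≫ ofC (T := T) b = ofC (f ≫ b) := by
  apply toC_inj
  show (f ≫ T.η.app _) ≫ (T : C ⥤ C).map b ≫ T.μ.app _ = f ≫ b
  rw [Category.assoc]
  erw [T.η.naturality_assoc]
  rw [← Functor.map_comp_assoc]
  erw [← T.η.naturality_assoc]
  simp

lemma ofC_comp_toKleisli {T : Monad C} {X A Y : C} (b : X ⟶ (T : C ⥤ C).obj A)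
    (f : A ⟶ Y) :
    ofC b ≫ (Kleisli.Adjunction.toKleisli T).map f = ofC (b ≫ (T : C ⥤ C).map f) := by
  apply toC_inj
  show b ≫ (T : C ⥤ C).map (f ≫ T.η.app _) ≫ T.μ.app _ = b ≫ (T : C ⥤ C).map f
  simp

lemma ofC_comp_ofC {T : Monad C} {X A Y : C} (b : X ⟶ (T : C ⥤ C).obj A)
    (c : A ⟶ (T : C ⥤ C).obj Y) :
    ofC b ≫ ofC c = ofC (b ≫ (T : C ⥤ C).map c ≫ T.μ.app Y) := rfl

lemma kl_id_eq_ofC (T : Monad C) (X : C) :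
    @CategoryStruct.id (Kleisli T) _ ((Kleisli.Adjunction.toKleisli T).obj X) = ofC (T.η.app X) := rfl

lemma eqToHom_cancel {D : Type*} [Category D] {A A' B B' : D} (p : A = A') (q : B' = B)
    {u v : A' ⟶ B'} (h : eqToHom p ≫ u ≫ eqToHom q = eqToHom p ≫ v ≫ eqToHom q) :
    u = v := by
  subst p; subst q; simpa using h

/-- Every functor between Kleisli categories commuting strictly with the free functors
from `C` is of the form `α_!` for a unique monad morphism `α : S ⟶ T`; hence the Kleisli
construction gives a fully faithful functor from the category of monads on `C` to
categories under `C`. -/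
theorem kleisli_functor_under_base_eq_of_monadHom
    (S T : Monad C) (Q : Kleisli S ⥤ Kleisli T)
    (hQ : Kleisli.Adjunction.toKleisli S ⋙ Q = Kleisli.Adjunction.toKleisli T) :
    ∃! α : S ⟶ T, Q = kleisliPush α := by
  have hobj : ∀ X : C, Q.obj ((Kleisli.Adjunction.toKleisli S).obj X)
      = (Kleisli.Adjunction.toKleisli T).obj X := fun X => Functor.congr_obj hQ X
  have hmapF : ∀ {X Y : C} (f : X ⟶ Y),
      Q.map ((Kleisli.Adjunction.toKleisli S).map f)
        = eqToHom (hobj X) ≫ (Kleisli.Adjunction.toKleisli T).map f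
            ≫ eqToHom (hobj Y).symm := fun {X Y} f => Functor.congr_hom hQ f
  -- candidate components of the monad morphism
  set a : ∀ Y : C, ((S : C ⥤ C).obj Y ⟶ (T : C ⥤ C).obj Y) :=
    fun Y => toC (eqToHom (hobj ((S : C ⥤ C).obj Y)).symm ≫ Q.map (kH S Y)
      ≫ eqToHom (hobj Y)) with ha
  have hq : ∀ Y : C, Q.map (kH S Y)
      = eqToHom (hobj ((S : C ⥤ C).obj Y)) ≫ ofC (a Y) ≫ eqToHom (hobj Y).symm := by
    intro Y
    rw [ha]
    simp only [ofC_toC, eqToHom_trans_assoc, eqToHom_refl, Category.id_comp,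
      Category.assoc, eqToHom_trans, Category.comp_id]
  -- master computation of `Q.map`
  have master : ∀ {X Y : C} (f : KlHom S X Y),
      Q.map f = eqToHom (hobj X) ≫ ofC (toC f ≫ a Y) ≫ eqToHom (hobj Y).symm := by
    intro X Y f
    conv_lhs => rw [factor f]
    rw [Q.map_comp, hmapF, hq]
    simp only [Category.assoc, eqToHom_trans_assoc, eqToHom_refl, Category.id_comp]
    rw [← Category.assoc ((Kleisli.Adjunction.toKleisli T).map (toC f)),
      toKleisli_comp_ofC]
  -- naturality
  have hnat : ∀ {X Y : C} (f : X ⟶ Y),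
      (S : C ⥤ C).map f ≫ a Y = a X ≫ (T : C ⥤ C).map f := by
    intro X Y f
    have h1 := congrArg Q.map (kH_comp_toKleisli (S := S) f)
    rw [Q.map_comp, hq, hmapF, master (ofC ((S : C ⥤ C).map f))] at h1
    
    simp only [Category.assoc, eqToHom_trans_assoc, eqToHom_refl, Category.id_comp,
      toC_ofC] at h1
    rw [← Category.assoc (ofC (a X)), ofC_comp_toKleisli] at h1
    have h2 := eqToHom_cancel _ _ h1
    have := congrArg toC h2
    simpa [toC_ofC] using this.symm
  -- unit law
  have hη : ∀ X : C, S.η.app X ≫ a X = T.η.app X := by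
    intro X
    have h1 : Q.map (@CategoryStruct.id (Kleisli S) _ ((Kleisli.Adjunction.toKleisli S).obj X)) = 𝟙 (Q.obj ((Kleisli.Adjunction.toKleisli S).obj X)) := Q.map_id _
    rw [kl_id_eq_ofC, master (ofC (S.η.app X))] at h1
    have h2 : (𝟙 (Q.obj ((Kleisli.Adjunction.toKleisli S).obj X)) : Q.obj ((Kleisli.Adjunction.toKleisli S).obj X) ⟶ Q.obj ((Kleisli.Adjunction.toKleisli S).obj X))
        = eqToHom (hobj X) ≫ ofC (T.η.app X) ≫ eqToHom (hobj X).symm := by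
      rw [← kl_id_eq_ofC]
      simp
    rw [h2] at h1
    have h3 := eqToHom_cancel _ _ h1
    have := congrArg toC h3
    simpa [toC_ofC] using this
  -- multiplication law
  have hμ : ∀ X : C, S.μ.app X ≫ a X
      = a ((S : C ⥤ C).obj X) ≫ (T : C ⥤ C).map (a X) ≫ T.μ.app X := by
    intro X
    have h1 := congrArg Q.map (kH_comp_kH (S := S) X)
    rw [Q.map_comp, hq, hq, master (ofC (S.μ.app X))] at h1
    simp only [Category.assoc, eqToHom_trans_assoc, eqToHom_refl, Category.id_comp,
      toC_ofC] at h1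
    rw [← Category.assoc (ofC (a ((S : C ⥤ C).obj X))), ofC_comp_ofC] at h1
    have h2 := eqToHom_cancel _ _ h1
    have := congrArg toC h2
    simpa [toC_ofC] using this.symm
  have hμ' : ∀ X : C, S.μ.app X ≫ a X
      = ((S : C ⥤ C).map (a X) ≫ a ((T : C ⥤ C).obj X)) ≫ T.μ.app X := by
    intro X
    rw [hμ X, hnat (a X)]
    simp
  -- assemble the monad morphism
  set α : S ⟶ T := ⟨⟨a, fun {X Y} f => hnat f⟩, hη, hμ'⟩ with hα
  have hex : Q = kleisliPush α := by
    refine CategoryTheory.Functor.ext (fun X => hobj X.of) ?_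
    intro X Y f
    exact master (X := X.of) (Y := Y.of) f
  refine ⟨α, hex, ?_⟩
  -- uniqueness
  intro β hβ
  have hpp : kleisliPush β = kleisliPush α := hβ.symm.trans hex
  apply MonadHom.ext
  funext Y
  have h1 := Functor.congr_hom hpp (kH S Y)
  have h2 : (kleisliPush β).map (kH S Y) = ofC (𝟙 _ ≫ β.app Y) := rfl
  have h3 : (kleisliPush α).map (kH S Y) = ofC (𝟙 _ ≫ α.app Y) := rfl
  rw [h2, h3] at h1
  have h4 := congrArg toC h1
  simp only [eqToHom_refl, Category.id_comp, Category.comp_id, toC_ofC] at h4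
  erw [eqToHom_refl, eqToHom_refl, Category.id_comp, Category.comp_id] at h4
  simpa [toC_ofC] using h4
end

section
/- For any bijective-on-objects functor F : A → B between small categories, the precomposition functor [F, 1] : [B, Set] → [A, Set] between functor categories is a discrete isofibration. -/
open CategoryTheory

universe u

section Aux

variable {A B : Type u} [SmallCategory A] [SmallCategory B]

/-- The canonical lift of `b` along a bijective-on-objects `F`. -/
def liftF (F : A ⥤ B) (e : B → A) (he : ∀ y, F.obj (e y) = y)
    (a : B ⥤ Type u) (b : A ⥤ Type u) (f : b ≅ F ⋙ a) : B ⥤ Type u where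
  obj y := b.obj (e y)
  map {y y'} g := f.hom.app (e y) ≫ a.map (eqToHom (he y) ≫ g ≫ eqToHom (he y').symm)
    ≫ f.inv.app (e y')
  map_id y := by
    simp
  map_comp {y y' y''} g g' := by
    simp only [Category.assoc]
    rw [← Category.assoc (f.inv.app (e y')) (f.hom.app (e y'))]
    simp only [Iso.inv_hom_id_app, Category.id_comp]
    rw [← Functor.map_comp_assoc]
    simp

def liftIso (F : A ⥤ B) (e : B → A) (he : ∀ y, F.obj (e y) = y)
    (a : B ⥤ Type u) (b : A ⥤ Type u) (f : b ≅ F ⋙ a) :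
    liftF F e he a b f ≅ a :=
  NatIso.ofComponents (fun y => f.app (e y) ≪≫ eqToIso (congrArg a.obj (he y)))
    (by
      intro y y' g
      simp [liftF, eqToHom_map])

lemma key1 (F : A ⥤ B) (a : B ⥤ Type u) (b : A ⥤ Type u) (f : b ≅ F ⋙ a)
    {z x z' x' : A} (h : z = x) (h' : z' = x') (g : x ⟶ x') :
    f.hom.app z ≫ a.map (eqToHom (congrArg F.obj h) ≫ F.map g ≫ eqToHom (congrArg F.obj h').symm)
      ≫ f.inv.app z'
    = eqToHom (congrArg b.obj h) ≫ b.map g ≫ eqToHom (congrArg b.obj h').symm := by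
  subst h h'
  simp only [eqToHom_refl, Category.id_comp, Category.comp_id]
  have nat := f.hom.naturality g
  simp only [Functor.comp_map] at nat
  rw [← Category.assoc, ← nat, Category.assoc, Iso.hom_inv_id_app, Category.comp_id]

lemma key2 (F : A ⥤ B) (a : B ⥤ Type u) (b : A ⥤ Type u) (f : b ≅ F ⋙ a)
    {z x : A} (h : z = x) :
    f.hom.app z ≫ eqToHom (congrArg (fun t => a.obj (F.obj t)) h)
    = eqToHom (congrArg b.obj h) ≫ f.hom.app x := by
  subst h; simp

lemma lift_eq (F : A ⥤ B) (e : B → A) (he : ∀ y, F.obj (e y) = y) (he2 : ∀ x, e (F.obj x) = x)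
    (a : B ⥤ Type u) (b : A ⥤ Type u) (f : b ≅ F ⋙ a) :
    F ⋙ liftF F e he a b f = b := by
  have hobj : ∀ x : A, (F ⋙ liftF F e he a b f).obj x = b.obj x :=
    fun x => congrArg b.obj (he2 x)
  exact CategoryTheory.Functor.ext hobj (fun x x' g => key1 F a b f (he2 x) (he2 x') g)

lemma cand_map (F : A ⥤ B) (a : B ⥤ Type u) (b : A ⥤ Type u) (f : b ≅ F ⋙ a)
    (H : B ⥤ Type u) (i : H ≅ a) (hq : F ⋙ H = b)
    (hyp : Functor.whiskerLeft F i.hom = eqToHom hq ≫ f.hom)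
    {x x' : A} {y y' : B} (h : F.obj x = y) (h' : F.obj x' = y') (g : y ⟶ y')
    (E₁ : H.obj y = b.obj x) (E₂ : b.obj x' = H.obj y') :
    H.map g = eqToHom E₁ ≫ f.hom.app x ≫ a.map (eqToHom h ≫ g ≫ eqToHom h'.symm)
      ≫ f.inv.app x' ≫ eqToHom E₂ := by
  subst h h'
  have hx : i.hom.app (F.obj x) = eqToHom E₁ ≫ f.hom.app x := by
    have := congrFun (congrArg NatTrans.app hyp) x
    simpa [eqToHom_app] using this
  have hx' : i.hom.app (F.obj x') = eqToHom E₂.symm ≫ f.hom.app x' := by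
    have := congrFun (congrArg NatTrans.app hyp) x'
    simpa [eqToHom_app] using this
  have nat : H.map g ≫ i.hom.app (F.obj x') = i.hom.app (F.obj x) ≫ a.map g :=
    i.hom.naturality g
  have : H.map g = i.hom.app (F.obj x) ≫ a.map g ≫ i.inv.app (F.obj x') := by
    rw [← Category.assoc, ← nat]; simp
  have hinv : i.inv.app (F.obj x') = f.inv.app x' ≫ eqToHom E₂ := by
    rw [← cancel_epi (i.hom.app (F.obj x')), Iso.hom_inv_id_app, hx']
    simp
  rw [this, hx, hinv]
  simp

end Aux

/-- For a bijective-on-objects functor `F : A ⥤ B` between small categories, the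
precomposition functor `[F, 1] : [B, Set] ⥤ [A, Set]` is a discrete isofibration. -/
theorem whiskeringLeft_discreteIsofibration
    {A B : Type u} [SmallCategory A] [SmallCategory B]
    (F : A ⥤ B) (hF : Function.Bijective F.obj) :
    DiscreteIsofibration
      ((Functor.whiskeringLeft A B (Type u)).obj F :
        (B ⥤ Type u) ⥤ (A ⥤ Type u)) := by
  intro a b f
  set e : B → A := Function.surjInv hF.2 with he_def
  have he : ∀ y, F.obj (e y) = y := fun y => Function.surjInv_eq hF.2 y
  have he2 : ∀ x, e (F.obj x) = x := fun x => hF.1 (he (F.obj x))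
  have heq : F ⋙ liftF F e he a b f = b := lift_eq F e he he2 a b f
  have cond : Functor.whiskerLeft F (liftIso F e he a b f).hom = eqToHom heq ≫ f.hom := by
    apply NatTrans.ext
    funext x
    have h2 := key2 F a b f (he2 x)
    simp only [Functor.whiskerLeft, NatTrans.comp_app, eqToHom_app]
    exact h2
  refine ⟨⟨liftF F e he a b f, liftIso F e he a b f, heq⟩, cond, ?_⟩
  rintro ⟨H, i, hq⟩ hyp
  have hyp' : Functor.whiskerLeft F i.hom = eqToHom hq ≫ f.hom := hyp
  have hobj : ∀ y, H.obj y = (liftF F e he a b f).obj y := fun y =>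
    (congrArg H.obj (he y)).symm.trans (Functor.congr_obj hq (e y))
  have hH : H = liftF F e he a b f := by
    refine CategoryTheory.Functor.ext hobj (fun y y' g => ?_)
    have h1 := cand_map F a b f H i hq hyp' (he y) (he y') g (hobj y) (hobj y').symm
    rw [h1]
    simp [liftF]
  subst hH
  have hi : i = liftIso F e he a b f := by
    apply Iso.ext
    apply NatTrans.ext
    funext y
    obtain ⟨x, rfl⟩ := hF.2 y
    have c1 := congrFun (congrArg NatTrans.app hyp') x
    have c2 := congrFun (congrArg NatTrans.app cond) x
    simp only [Functor.whiskerLeft] at c1 c2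
    exact c1.trans c2.symm
  rw [hi]
end

section
/- For an adjunction L ⊣ R : D → C the following are equivalent: (a) the natural transformation R ε (R applied to the counit) is invertible; (b) ε L is invertible; (c) η R is invertible; (d) L η is invertible. -/
open CategoryTheory

/-- For an adjunction `L ⊣ R` the following are equivalent: (a) `R` applied to the counit
is invertible; (b) the counit is invertible at every object of the form `L c`; (c) the
unit is invertible at every object of the form `R d`; (d) `L` applied to the unit is
invertible. -/
theorem idempotent_adjunction_tfae
    {C D : Type*} [Category C] [Category D]
    (L : C ⥤ D) (R : D ⥤ C) (adj : L ⊣ R) :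
    [ ∀ d : D, IsIso (R.map (adj.counit.app d)),
      ∀ c : C, IsIso (adj.counit.app (L.obj c)),
      ∀ d : D, IsIso (adj.unit.app (R.obj d)),
      ∀ c : C, IsIso (L.map (adj.unit.app c)) ].TFAE := by
  tfae_have 1 → 3 := by
    intro h d
    have tri := adj.right_triangle_components d
    have := h d
    have h2 : adj.unit.app (R.obj d) = inv (R.map (adj.counit.app d)) := by
      apply IsIso.eq_inv_of_inv_hom_id tri
    rw [h2]; infer_instance
  tfae_have 3 → 1 := by
    intro h d
    have tri := adj.right_triangle_components d
    have := h d
    have h2 : R.map (adj.counit.app d) = inv (adj.unit.app (R.obj d)) :=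
      IsIso.eq_inv_of_hom_inv_id tri
    rw [h2]; infer_instance
  tfae_have 2 → 4 := by
    intro h c
    have tri := adj.left_triangle_components c
    have := h c
    have h2 : L.map (adj.unit.app c) = inv (adj.counit.app (L.obj c)) :=
      IsIso.eq_inv_of_inv_hom_id tri
    rw [h2]; infer_instance
  tfae_have 4 → 2 := by
    intro h c
    have tri := adj.left_triangle_components c
    have := h c
    have h2 : adj.counit.app (L.obj c) = inv (L.map (adj.unit.app c)) :=
      IsIso.eq_inv_of_hom_inv_id tri
    rw [h2]; infer_instance
  tfae_have 1 → 2 := by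
    intro h c
    have := h (L.obj c)
    -- both `R.map (L.map η)` and `η (R L c)` are sections of the iso `R.map ε (L c)`
    have s1 : R.map (L.map (adj.unit.app c)) ≫ R.map (adj.counit.app (L.obj c)) = 𝟙 _ := by
      rw [← R.map_comp]; simp [adj.left_triangle_components]
    have s2 := adj.right_triangle_components (L.obj c)
    have eq1 : R.map (L.map (adj.unit.app c)) = adj.unit.app (R.obj (L.obj c)) := by
      rw [IsIso.eq_inv_of_inv_hom_id s1, IsIso.eq_inv_of_inv_hom_id s2]
    have key : adj.counit.app (L.obj c) ≫ L.map (adj.unit.app c) = 𝟙 _ := by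
      apply (adj.homEquiv _ _).injective
      rw [adj.homEquiv_unit, adj.homEquiv_unit]
      simp only [Functor.map_comp, Functor.map_id, Category.comp_id]
      rw [← Category.assoc, s2]; simp [eq1]
    exact ⟨⟨L.map (adj.unit.app c), key, adj.left_triangle_components c⟩⟩
  tfae_have 2 → 1 := by
    intro h d
    have := h (R.obj d)
    have s1 : L.map (adj.unit.app (R.obj d)) ≫ L.map (R.map (adj.counit.app d)) = 𝟙 _ := by
      rw [← L.map_comp, adj.right_triangle_components]; simp
    have s2 := adj.left_triangle_components (R.obj d)
    have hη : IsIso (L.map (adj.unit.app (R.obj d))) := by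
      rw [IsIso.eq_inv_of_inv_hom_id s2]; infer_instance
    have eq1 : L.map (R.map (adj.counit.app d)) = adj.counit.app (L.obj (R.obj d)) := by
      rw [IsIso.eq_inv_of_hom_inv_id s1, IsIso.eq_inv_of_hom_inv_id s2]
    have key : R.map (adj.counit.app d) ≫ adj.unit.app (R.obj d) = 𝟙 _ := by
      apply (adj.homEquiv _ _).symm.injective
      rw [adj.homEquiv_counit, adj.homEquiv_counit]
      simp only [Functor.map_comp, Functor.map_id, Category.id_comp]
      rw [Category.assoc, s2]; simp [eq1]
    exact ⟨⟨adj.unit.app (R.obj d), key, adj.right_triangle_components d⟩⟩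
  tfae_finish
end

section
/- In the factorization C₀ →I A →K [C₀ᵒᵖ, Set] of the Yoneda embedding through a full subcategory A containing the representables, the nerve functor N_K : [C₀ᵒᵖ, Set] → [Aᵒᵖ, Set] is naturally isomorphic to right Kan extension along Iᵒᵖ : C₀ᵒᵖ → Aᵒᵖ, and a presheaf F : Aᵒᵖ → Set is in the essential image of N_K if and only if F is the right Kan extension of its own restriction along Iᵒᵖ. -/
open CategoryTheory

universe u

variable {C₀ : Type u} [SmallCategory C₀]

/-- The nerve functor `N_K : [C₀ᵒᵖ, Set] ⥤ [Aᵒᵖ, Set]` associated to the inclusion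
`K : A ⥤ [C₀ᵒᵖ, Set]` of a full subcategory of presheaves: it sends a presheaf `X` to the
presheaf `a ↦ Hom(K a, X)` on `A`. -/
noncomputable def presheafNerve (P : (C₀ᵒᵖ ⥤ Type u) → Prop) :
    (C₀ᵒᵖ ⥤ Type u) ⥤ ((ObjectProperty.FullSubcategory P)ᵒᵖ ⥤ Type u) :=
  yoneda ⋙ (Functor.whiskeringLeft (ObjectProperty.FullSubcategory P)ᵒᵖ (C₀ᵒᵖ ⥤ Type u)ᵒᵖ (Type u)).obj
    (ObjectProperty.ι P).op

/-- The corestriction `I : C₀ ⥤ A` of the Yoneda embedding. -/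
noncomputable def yonedaCorestriction (P : (C₀ᵒᵖ ⥤ Type u) → Prop)
    (hP : ∀ X : C₀, P (yoneda.obj X)) : C₀ ⥤ ObjectProperty.FullSubcategory P :=
  ObjectProperty.lift P yoneda hP

namespace PresheafNerveProof

variable (P : (C₀ᵒᵖ ⥤ Type u) → Prop) (hP : ∀ X : C₀, P (yoneda.obj X))

theorem corestriction_comp_inclusion :
    yonedaCorestriction P hP ⋙ ObjectProperty.ι P = yoneda :=
  rfl

instance faithfulI : (yonedaCorestriction P hP).Faithful := by
  have : (yonedaCorestriction P hP ⋙ ObjectProperty.ι P).Faithful := by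
    rw [corestriction_comp_inclusion]; infer_instance
  exact Functor.Faithful.of_comp (yonedaCorestriction P hP) (ObjectProperty.ι P)

instance fullI : (yonedaCorestriction P hP).Full := by
  have : (yonedaCorestriction P hP ⋙ ObjectProperty.ι P).Full := by
    rw [corestriction_comp_inclusion]; infer_instance
  exact Functor.Full.of_comp_faithful (yonedaCorestriction P hP) (ObjectProperty.ι P)

/-- Coerce a map of presheaves into the full subcategory. -/
noncomputable def toA {c : C₀} {a : ObjectProperty.FullSubcategory P} (f : yoneda.obj c ⟶ a.obj) :
    (yonedaCorestriction P hP).obj c ⟶ a :=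
  ObjectProperty.homMk f

/-- The hom-equivalence exhibiting the nerve as right adjoint to restriction along `Iᵒᵖ`. -/
@[simps]
noncomputable def homEquiv (G : (ObjectProperty.FullSubcategory P)ᵒᵖ ⥤ Type u) (X : C₀ᵒᵖ ⥤ Type u) :
    ((((Functor.whiskeringLeft C₀ᵒᵖ (ObjectProperty.FullSubcategory P)ᵒᵖ (Type u)).obj
        (yonedaCorestriction P hP).op).obj G ⟶ X)) ≃ (G ⟶ (presheafNerve P).obj X) where
  toFun ε :=
    { app := fun a => TypeCat.ofHom fun g =>
        { app := fun c => TypeCat.ofHom fun x => ε.app c (G.map (toA P hP (yonedaEquiv.symm x)).op g)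
          naturality := by
            intro c c' φ
            ext x
            dsimp
            have h1 : (toA P hP (yonedaEquiv.symm (a.unop.obj.map φ x))) =
                (yonedaCorestriction P hP).map φ.unop ≫ toA P hP (yonedaEquiv.symm x) := by
              dsimp [toA]
              rw [yonedaEquiv_symm_map]
              rfl
            rw [h1]
            have h2 := NatTrans.naturality_apply ε φ (G.map (toA P hP (yonedaEquiv.symm x)).op g)
            dsimp at h2
            rw [← h2, ← FunctorToTypes.map_comp_apply]
            rfl }
      naturality := by
        intro a a' ψ
        ext g
        apply NatTrans.ext
        funext c
        ext x
        dsimp [presheafNerve]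
        rw [← FunctorToTypes.map_comp_apply]
        have key : (toA P hP (yonedaEquiv.symm x) ≫ ψ.unop : _ ⟶ a.unop) =
            toA P hP (yonedaEquiv.symm (ψ.unop.hom.app c x)) :=
          ObjectProperty.hom_ext _ (yonedaEquiv_symm_naturality_right c.unop
            (show a'.unop.obj ⟶ a.unop.obj from ψ.unop.hom) x)
        rw [← key, op_comp, Quiver.Hom.op_unop] }
  invFun η :=
    { app := fun c => TypeCat.ofHom fun g => yonedaEquiv (η.app (Opposite.op ((yonedaCorestriction P hP).obj c.unop)) g)
      naturality := by
        intro c c' φ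
        ext g
        dsimp
        have h := NatTrans.naturality_apply η ((yonedaCorestriction P hP).map φ.unop).op g
        dsimp [presheafNerve] at h
        refine (congrArg yonedaEquiv h).trans ?_
        exact (yonedaEquiv_naturality' _ _).symm }
  left_inv ε := by
    apply NatTrans.ext
    funext c
    ext g
    dsimp
    change ε.app c (G.map (toA P hP (yonedaEquiv.symm (𝟙 c.unop))).op g) = ε.app c g
    have e1' : (yonedaEquiv.symm (𝟙 c.unop) : yoneda.obj c.unop ⟶ yoneda.obj c.unop) = 𝟙 _ := by
      apply yonedaEquiv.injective
      rw [Equiv.apply_symm_apply, yonedaEquiv_apply]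
      rfl
    have e1 : toA P hP (yonedaEquiv.symm (𝟙 c.unop)) =
        𝟙 ((yonedaCorestriction P hP).obj c.unop) := ObjectProperty.hom_ext _ e1'
    rw [e1]
    simp
  right_inv η := by
    apply NatTrans.ext
    funext a
    ext g
    apply NatTrans.ext
    funext c
    ext x
    dsimp
    have h := NatTrans.naturality_apply η (toA P hP (yonedaEquiv.symm x)).op g
    dsimp [presheafNerve] at h
    refine (congrArg yonedaEquiv h).trans ?_
    refine (yonedaEquiv_comp (F := a.unop.obj) (yonedaEquiv.symm x) (η.app a g)).trans ?_
    exact congrArg ((η.app a g).app c) (Equiv.apply_symm_apply yonedaEquiv x)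

/-- The adjunction between restriction along `Iᵒᵖ` and the nerve. -/
noncomputable def nerveAdjunction :
    ((Functor.whiskeringLeft C₀ᵒᵖ (ObjectProperty.FullSubcategory P)ᵒᵖ (Type u)).obj
        (yonedaCorestriction P hP).op) ⊣ presheafNerve P :=
  Adjunction.mkOfHomEquiv
    { homEquiv := fun G X => homEquiv P hP G X
      homEquiv_naturality_left_symm := by intros; rfl
      homEquiv_naturality_right := by intros; rfl }

end PresheafNerveProof

/-- In the presheaf context `C₀ →I A →K [C₀ᵒᵖ, Set]` (with `A` a full subcategory of
presheaves containing the representables), the nerve functor `N_K` is naturally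
isomorphic to right Kan extension along `Iᵒᵖ`, and a presheaf `F : Aᵒᵖ ⥤ Set` is in the
essential image of `N_K` if and only if `F` is the right Kan extension of its own
restriction along `Iᵒᵖ` (with identity counit). -/
theorem presheafNerve_isoRan_and_essImage
    (P : (C₀ᵒᵖ ⥤ Type u) → Prop) (hP : ∀ X : C₀, P (yoneda.obj X)) :
    Nonempty (presheafNerve P ≅ (yonedaCorestriction P hP).op.ran) ∧
      (∀ F : (ObjectProperty.FullSubcategory P)ᵒᵖ ⥤ Type u,
        (presheafNerve P).essImage F ↔
          F.IsRightKanExtension (𝟙 ((yonedaCorestriction P hP).op ⋙ F))) := by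
  let adj := (yonedaCorestriction P hP).op.ranAdjunction (Type u)
  let e : presheafNerve P ≅ (yonedaCorestriction P hP).op.ran :=
    Adjunction.rightAdjointUniq (PresheafNerveProof.nerveAdjunction P hP) adj
  have hff : ((yonedaCorestriction P hP).op.ran).FullyFaithful :=
    adj.fullyFaithfulROfIsIsoCounit
  have h1 : ((yonedaCorestriction P hP).op.ran).Full := hff.full
  have h2 : ((yonedaCorestriction P hP).op.ran).Faithful := hff.faithful
  refine ⟨⟨e⟩, fun F => ?_⟩
  rw [Functor.essImage_eq_of_natIso e]
  exact (Adjunction.isIso_unit_app_iff_mem_essImage adj).symm.trans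
    (Functor.isIso_ranAdjunction_unit_app_iff _ _)
end

section
/- Let A be the one-object full subcategory of Set on a fixed two-element set 2. The endofunctor X ↦ (X²)² ≅ X⁴ of Set is not a left Kan extension along the inclusion K : A → Set of any functor A → Set, even though X ↦ X² is such a left Kan extension. Consequently, endofunctors of Set that are left Kan extensions along K of their restriction to A are not closed under composition. -/
open CategoryTheory

/-- The one-object full subcategory of `Set` on a fixed two-element set (here `Bool`). -/
def TwoArity : Type 1 := ObjectProperty.FullSubcategory (fun X : Type => X = Bool)

instance : Category TwoArity :=
  (inferInstance : Category (ObjectProperty.FullSubcategory (fun X : Type => X = Bool)))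

/-- The inclusion `K : A ⥤ Set` of the one-object full subcategory on `Bool`. -/
def twoArityIncl : TwoArity ⥤ Type :=
  ObjectProperty.ι (fun X : Type => X = Bool)

/-- An endofunctor `F` of `Set` is *`A`-induced* if it is the left Kan extension along
`K` of its own restriction `K ⋙ F` (with identity unit). -/
def AInduced (F : Type ⥤ Type) : Prop :=
  F.IsLeftKanExtension (𝟙 (twoArityIncl ⋙ F))

/-- The squaring endofunctor `X ↦ X × X` of `Set`. -/
def sqFunctor : Type ⥤ Type where
  obj X := X × X
  map f := TypeCat.ofHom (Prod.map f f)

/-- The unique object of `TwoArity`. -/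
def twoObj : TwoArity := ⟨Bool, rfl⟩

/-- The map `Bool → X` selecting the two components of a pair. -/
def pick {X : Type} (p : X × X) : Bool → X := fun b => bif b then p.1 else p.2

theorem sq_AInduced : AInduced sqFunctor := by
  constructor
  refine ⟨Limits.IsInitial.ofUniqueHom (fun E => ?_) (fun E m => ?_)⟩
  · refine StructuredArrow.homMk
      (⟨fun X => TypeCat.ofHom (fun p => E.right.map (TypeCat.ofHom (pick p)) (E.hom.app twoObj (true, false))), ?_⟩) ?_
    · intro X Y f
      ext (p : X × X)
      show E.right.map (TypeCat.ofHom (pick (f p.1, f p.2))) (E.hom.app twoObj (true, false)) =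
        E.right.map f (E.right.map (TypeCat.ofHom (pick p)) (E.hom.app twoObj (true, false)))
      refine Eq.trans ?_ (FunctorToTypes.map_comp_apply E.right _ _ _)
      have hp : TypeCat.ofHom (pick (f p.1, f p.2)) = TypeCat.ofHom (pick p) ≫ f := by
        ext b; cases b <;> rfl
      rw [hp]
    · ext A q
      obtain ⟨X, rfl⟩ := A
      show E.right.map (TypeCat.ofHom (pick q)) (E.hom.app twoObj (true, false)) =
        (𝟙 (twoArityIncl ⋙ sqFunctor) ≫ E.hom).app twoObj q
      simp only [NatTrans.comp_app, NatTrans.id_app, types_id_apply]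
      have h2 := types_congr_hom (E.hom.naturality (X := twoObj) (Y := twoObj)
        (ObjectProperty.homMk (TypeCat.ofHom (pick q)))) (true, false)
      have h2' : E.hom.app twoObj q =
          E.right.map (TypeCat.ofHom (pick q)) (E.hom.app twoObj ((true, false) :
            (twoArityIncl ⋙ sqFunctor).obj twoObj)) := h2
      exact h2'.symm
  · apply StructuredArrow.hom_ext
    ext X q
    have happ := types_congr_hom (NatTrans.congr_app m.w twoObj)
      ((true, false) : (twoArityIncl ⋙ sqFunctor).obj twoObj)
    have hnat := types_congr_hom (m.right.naturality (X := Bool) (Y := X) (TypeCat.ofHom (pick q)))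
      ((true, false) : Bool × Bool)
    have hnat' : m.right.app X q =
        E.right.map (TypeCat.ofHom (pick q)) (m.right.app Bool ((true, false) : Bool × Bool)) := hnat
    have happ' : E.hom.app twoObj ((true, false) : (twoArityIncl ⋙ sqFunctor).obj twoObj) =
        m.right.app Bool ((true, false) : Bool × Bool) := happ.symm
    show m.right.app X q = E.right.map (TypeCat.ofHom (pick q)) (E.hom.app twoObj (true, false))
    rw [hnat', happ']

/-- Quadruples with at most two distinct coordinates: a subfunctor of `X ↦ X⁴`. -/
def smallQuad : Type ⥤ Type where
  obj X := {q : (X × X) × (X × X) //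
    ∃ (f : Bool → X) (b : (Bool × Bool) × (Bool × Bool)),
      Prod.map (Prod.map f f) (Prod.map f f) b = q}
  map {X Y} h := TypeCat.ofHom (fun q => ⟨Prod.map (Prod.map h h) (Prod.map h h) q.1, by
    obtain ⟨f, b, hb⟩ := q.2
    exact ⟨h ∘ f, b, by rw [← hb]; rfl⟩⟩)
  map_id X := by ext q <;> rfl
  map_comp f g := by ext q <;> rfl

/-- The inclusion of the subfunctor `smallQuad` into `X ↦ X⁴`. -/
def quadIncl : smallQuad ⟶ sqFunctor ⋙ sqFunctor where
  app X := TypeCat.ofHom (fun q => q.1)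
  naturality X Y f := rfl

/-- On the subcategory `A`, every quadruple has at most two distinct coordinates. -/
def quadUnit : twoArityIncl ⋙ (sqFunctor ⋙ sqFunctor) ⟶ twoArityIncl ⋙ smallQuad where
  app A := match A with
    | ⟨_, rfl⟩ => TypeCat.ofHom (fun q => ⟨q, id, q, rfl⟩)
  naturality A B g := by
    obtain ⟨X, rfl⟩ := A
    obtain ⟨Y, rfl⟩ := B
    ext q
    exact Subtype.ext rfl

theorem not_AInduced_quad : ¬ AInduced (sqFunctor ⋙ sqFunctor) := by
  intro h
  have : (sqFunctor ⋙ sqFunctor).IsLeftKanExtension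
      (𝟙 (twoArityIncl ⋙ (sqFunctor ⋙ sqFunctor))) := h
  set F := sqFunctor ⋙ sqFunctor
  let γ : F ⟶ smallQuad :=
    F.descOfIsLeftKanExtension (𝟙 (twoArityIncl ⋙ F)) smallQuad quadUnit
  have hfac := F.descOfIsLeftKanExtension_fac (𝟙 (twoArityIncl ⋙ F)) smallQuad quadUnit
  have hret : γ ≫ quadIncl = 𝟙 F := by
    apply F.hom_ext_of_isLeftKanExtension (𝟙 (twoArityIncl ⋙ F))
    rw [Functor.whiskerLeft_comp, ← Category.assoc, hfac]
    ext A q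
    obtain ⟨X, rfl⟩ := A
    rfl
  -- evaluate at `Fin 4` on a quadruple with four distinct entries
  have h4 := types_congr_hom (congrArg (fun (τ : F ⟶ F) => τ.app (Fin 4)) hret)
    (((0, 1), (2, 3)) : (Fin 4 × Fin 4) × (Fin 4 × Fin 4))
  have hval : (γ.app (Fin 4) (((0, 1), (2, 3)))).1
      = (((0, 1), (2, 3)) : (Fin 4 × Fin 4) × (Fin 4 × Fin 4)) := h4
  obtain ⟨f, ⟨⟨b1, b2⟩, ⟨b3, b4⟩⟩, hb⟩ := (γ.app (Fin 4) (((0, 1), (2, 3)))).2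
  rw [hval] at hb
  have e1 : f b1 = 0 := congrArg (fun p => p.1.1) hb
  have e2 : f b2 = 1 := congrArg (fun p => p.1.2) hb
  have e3 : f b3 = 2 := congrArg (fun p => p.2.1) hb
  cases b1 <;> cases b2 <;> cases b3 <;> simp_all

/-- For the one-object full subcategory `A` of `Set` on a two-element set: the squaring
functor `X ↦ X²` is `A`-induced (a left Kan extension along `K : A ⥤ Set` of its
restriction), but its self-composite `X ↦ X⁴` is not.  Consequently, `A`-induced
endofunctors of `Set` are not closed under composition. -/
theorem twoArity_not_saturated :
    AInduced sqFunctor ∧ ¬ AInduced (sqFunctor ⋙ sqFunctor) ∧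
      ¬ (∀ F G : Type ⥤ Type, AInduced F → AInduced G → AInduced (F ⋙ G)) := by
  exact ⟨sq_AInduced, not_AInduced_quad,
    fun h => not_AInduced_quad (h sqFunctor sqFunctor sq_AInduced sq_AInduced)⟩
end
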